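/- For every integer $N\ge 2$ and every real $x\in[0,1)$, the function $F_N(x):=(1-x^N)^2-(N+1)(1-x^N)+N(1-x^{N+1})$ satisfies $F_N(x)\ge 0$, with equality if and only if $x=0$. -/
import Mathlib

theorem stmt_2 (N : ℕ) (hN : 2 ≤ N) (x : ℝ) (hx0 : 0 ≤ x) (hx1 : x < 1) :
    0 ≤ (1 - x ^ N) ^ 2 - (N + 1) * (1 - x ^ N) + N * (1 - x ^ (N + 1)) ∧
    ((1 - x ^ N) ^ 2 - (N + 1) * (1 - x ^ N) + N * (1 - x ^ (N + 1)) = 0 ↔ x = 0) := by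
  have hsum : ∑ i ∈ Finset.range N, x ^ i < N := by
    have : ∑ i ∈ Finset.range N, x ^ i < ∑ i ∈ Finset.range N, (1 : ℝ) := by
      apply Finset.sum_lt_sum
      · intro i _
        exact pow_le_one₀ hx0 hx1.le
      · exact ⟨1, Finset.mem_range.mpr (by omega), by simpa using hx1⟩
    simpa using this
  have hgeom : (∑ i ∈ Finset.range N, x ^ i) * (x - 1) = x ^ N - 1 := geom_sum_mul x N
  have hg : 0 < x ^ N - N * x + ((N : ℝ) - 1) := by
    have h1 : x ^ N - N * x + ((N : ℝ) - 1) =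
        (1 - x) * ((N : ℝ) - ∑ i ∈ Finset.range N, x ^ i) := by
      nlinarith [hgeom]
    rw [h1]
    exact mul_pos (by linarith) (by linarith)
  have hF : (1 - x ^ N) ^ 2 - (N + 1) * (1 - x ^ N) + N * (1 - x ^ (N + 1)) =
      x ^ N * (x ^ N - N * x + ((N : ℝ) - 1)) := by
    rw [pow_succ]; ring
  have hxN : 0 ≤ x ^ N := pow_nonneg hx0 N
  constructor
  · rw [hF]; positivity
  · rw [hF]
    constructor
    · intro h
      rcases mul_eq_zero.mp h with h' | h'
      · exact pow_eq_zero_iff (by omega) |>.mp h'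
      · linarith
    · intro h
      simp [h, zero_pow (by omega : N ≠ 0)]
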